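/- Let k ⊂ L be a finite Galois extension with Galois group G. If [L : k] = p₁^{e₁} ⋯ p_m^{e_m} and the subgroup lattice of G (equivalently, the lattice of intermediate fields) is distributive, then G is cyclic, the length of the lattice of intermediate fields equals e₁ + ⋯ + e_m, and the number of intermediate fields equals the number of divisors of [L : k]. -/

import Mathlib

open Subgroup

section Aux

variable {G : Type*} [Group G]

set_option maxHeartbeats 1000000 in
/-- Ore's argument: if the subgroup lattice satisfies the join-distributive law, then
any two elements commute. -/
theorem aux_comm
    (hsup : ∀ A B C : Subgroup G, A ⊔ (B ⊓ C) = (A ⊔ B) ⊓ (A ⊔ C)) (a b : G) :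
    Commute a b := by
  have h1 : zpowers (a * b) ⊔ zpowers a = zpowers a ⊔ zpowers b := by
    apply le_antisymm
    · exact sup_le (zpowers_le.mpr (mul_mem (mem_sup_left (mem_zpowers a))
        (mem_sup_right (mem_zpowers b)))) le_sup_left
    · refine sup_le le_sup_right (zpowers_le.mpr ?_)
      have hmem : a⁻¹ * (a * b) ∈ zpowers (a * b) ⊔ zpowers a :=
        mul_mem (inv_mem (mem_sup_right (mem_zpowers a)))
          (mem_sup_left (mem_zpowers (a * b)))
      simpa using hmem
  have h2 : zpowers (a * b) ⊔ zpowers b = zpowers a ⊔ zpowers b := by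
    apply le_antisymm
    · exact sup_le (zpowers_le.mpr (mul_mem (mem_sup_left (mem_zpowers a))
        (mem_sup_right (mem_zpowers b)))) le_sup_right
    · refine sup_le (zpowers_le.mpr ?_) le_sup_right
      have hmem : (a * b) * b⁻¹ ∈ zpowers (a * b) ⊔ zpowers b :=
        mul_mem (mem_sup_left (mem_zpowers (a * b)))
          (inv_mem (mem_sup_right (mem_zpowers b)))
      simpa using hmem
  have hS : zpowers (a * b) ⊔ (zpowers a ⊓ zpowers b) = zpowers a ⊔ zpowers b := by
    rw [hsup, h1, h2, inf_idem]
  have hda : ∀ d ∈ zpowers a ⊓ zpowers b, Commute d a := by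
    intro d hd
    obtain ⟨k, hk⟩ := mem_zpowers_iff.mp (Subgroup.mem_inf.mp hd).1
    rw [← hk]
    exact (Commute.refl a).zpow_left k
  have hdb : ∀ d ∈ zpowers a ⊓ zpowers b, Commute d b := by
    intro d hd
    obtain ⟨k, hk⟩ := mem_zpowers_iff.mp (Subgroup.mem_inf.mp hd).2
    rw [← hk]
    exact (Commute.refl b).zpow_left k
  have hd_ab : ∀ d ∈ zpowers a ⊓ zpowers b, Commute d (a * b) := fun d hd =>
    (hda d hd).mul_right (hdb d hd)
  have hdd : ∀ d ∈ zpowers a ⊓ zpowers b, ∀ d' ∈ zpowers a ⊓ zpowers b, Commute d d' := by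
    intro d hd d' hd'
    obtain ⟨k, hk⟩ := mem_zpowers_iff.mp (Subgroup.mem_inf.mp hd).1
    obtain ⟨l, hl⟩ := mem_zpowers_iff.mp (Subgroup.mem_inf.mp hd').1
    rw [← hk, ← hl]
    exact Commute.zpow_zpow_self a k l
  have hc1 : ∀ x ∈ zpowers a ⊔ zpowers b, Commute (a * b) x := by
    intro x hx
    rw [← hS] at hx
    have hle : zpowers (a * b) ⊔ (zpowers a ⊓ zpowers b) ≤ centralizer {a * b} := by
      refine sup_le (zpowers_le.mpr ?_) ?_
      · exact mem_centralizer_iff.mpr fun g hg => by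
          rw [Set.mem_singleton_iff] at hg; rw [hg]
      · intro d hd
        exact mem_centralizer_iff.mpr fun g hg => by
          rw [Set.mem_singleton_iff] at hg; rw [hg]; exact ((hd_ab d hd).symm).eq
    exact mem_centralizer_iff.mp (hle hx) (a * b) rfl
  have hc2 : ∀ d ∈ zpowers a ⊓ zpowers b, ∀ x ∈ zpowers a ⊔ zpowers b, Commute d x := by
    intro d hd x hx
    rw [← hS] at hx
    have hle : zpowers (a * b) ⊔ (zpowers a ⊓ zpowers b) ≤ centralizer {d} := by
      refine sup_le (zpowers_le.mpr ?_) ?_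
      · exact mem_centralizer_iff.mpr fun g hg => by
          rw [Set.mem_singleton_iff] at hg; rw [hg]; exact (hd_ab d hd).eq
      · intro d' hd'
        exact mem_centralizer_iff.mpr fun g hg => by
          rw [Set.mem_singleton_iff] at hg; rw [hg]; exact (hdd d hd d' hd').eq
    exact mem_centralizer_iff.mp (hle hx) d rfl
  have hmain : ∀ x ∈ zpowers a ⊔ zpowers b, ∀ y ∈ zpowers a ⊔ zpowers b, Commute x y := by
    intro x hx y hy
    rw [← hS] at hy
    have hle : zpowers (a * b) ⊔ (zpowers a ⊓ zpowers b) ≤ centralizer {x} := by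
      refine sup_le (zpowers_le.mpr ?_) ?_
      · exact mem_centralizer_iff.mpr fun g hg => by
          rw [Set.mem_singleton_iff] at hg; rw [hg]; exact ((hc1 x hx).symm).eq
      · intro d hd
        exact mem_centralizer_iff.mpr fun g hg => by
          rw [Set.mem_singleton_iff] at hg; rw [hg]; exact ((hc2 d hd x hx).symm).eq
    exact mem_centralizer_iff.mp (hle hy) x rfl
  exact hmain a (mem_sup_left (mem_zpowers a)) b (mem_sup_right (mem_zpowers b))

variable [Finite G]

/-- Two distinct subgroups of the same prime order intersect trivially. -/
theorem aux_inf_eq_bot {p : ℕ} (hp : p.Prime) {A B : Subgroup G}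
    (hA : Nat.card A = p) (hB : Nat.card B = p) (hAB : A ≠ B) : A ⊓ B = ⊥ := by
  have hdvd : Nat.card (A ⊓ B : Subgroup G) ∣ p := by
    have h := card_dvd_of_le (inf_le_left : A ⊓ B ≤ A)
    rwa [hA] at h
  rcases (Nat.dvd_prime hp).mp hdvd with h1 | h1
  · exact (A ⊓ B).eq_bot_of_card_eq h1
  · exfalso
    have e1 : A ⊓ B = A := Subgroup.eq_of_le_of_card_ge inf_le_left (by rw [h1, hA])
    have e2 : A ⊓ B = B := Subgroup.eq_of_le_of_card_ge inf_le_right (by rw [h1, hB])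
    exact hAB (e1.symm.trans e2)

/-- A finite group with meet-distributive subgroup lattice in which all elements commute
is cyclic. -/
theorem aux_cyclic
    (hinf : ∀ A B C : Subgroup G, A ⊓ (B ⊔ C) = (A ⊓ B) ⊔ (A ⊓ C))
    (hcomm : ∀ a b : G, Commute a b) : IsCyclic G := by
  letI : CommMonoid G := { (inferInstance : Monoid G) with mul_comm := fun a b => hcomm a b }
  have hEE : Monoid.ExponentExists G := Monoid.ExponentExists.of_finite
  obtain ⟨g, hg⟩ := Monoid.exists_orderOf_eq_exponent hEE
  refine ⟨g, ?_⟩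
  suffices H : ∀ n : ℕ, ∀ x : G, orderOf x = n → x ∈ zpowers g by
    intro x; exact H (orderOf x) x rfl
  intro n
  induction n using Nat.strong_induction_on with
  | _ n ih =>
  intro x hx
  by_cases hxg : x ∈ zpowers g
  · exact hxg
  exfalso
  -- basic facts
  have hx1 : x ≠ 1 := fun h => hxg (h ▸ one_mem _)
  have hn0 : n ≠ 0 := by
    rw [← hx]; exact (orderOf_pos x).ne'
  have hn1 : n ≠ 1 := by
    rw [← hx]; simpa [orderOf_eq_one_iff] using hx1
  set p := n.minFac with hpdef
  have hp : p.Prime := Nat.minFac_prime hn1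
  haveI : Fact p.Prime := ⟨hp⟩
  have hpn : p ∣ n := Nat.minFac_dvd n
  set e := Monoid.exponent G with hedef
  have hge : orderOf g = e := hg
  have he0 : e ≠ 0 := Monoid.ExponentExists.exponent_ne_zero hEE
  have hne : n ∣ e := hx ▸ Monoid.order_dvd_exponent x
  have hpe : p ∣ e := hpn.trans hne
  -- x ^ p ∈ zpowers g by induction
  have hxp : x ^ p ∈ zpowers g := by
    refine ih (n / p) ?_ (x ^ p) ?_
    · exact Nat.div_lt_self (Nat.pos_of_ne_zero hn0) hp.one_lt
    · rw [orderOf_pow, hx, Nat.gcd_eq_right hpn]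
  obtain ⟨m, hm⟩ := mem_zpowers_iff.mp hxp
  -- p divides m
  have hxe : x ^ e = 1 := Monoid.pow_exponent_eq_one x
  have hkey : g ^ (m * (e / p : ℕ)) = 1 := by
    rw [zpow_mul, hm, ← zpow_natCast, ← zpow_mul, ← Nat.cast_mul,
      Nat.mul_div_cancel' hpe, zpow_natCast, hxe]
  have hdvd1 : ((e : ℤ)) ∣ m * (e / p : ℕ) := by
    have h := orderOf_dvd_iff_zpow_eq_one.mpr hkey
    rwa [hge] at h
  have hep0 : (e / p : ℕ) ≠ 0 := by
    have := Nat.div_pos (Nat.le_of_dvd (Nat.pos_of_ne_zero he0) hpe) hp.pos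
    exact this.ne'
  have hpm : (p : ℤ) ∣ m := by
    have h1 : ((p : ℤ) * (e / p : ℕ)) ∣ m * (e / p : ℕ) := by
      rw [← Nat.cast_mul, Nat.mul_div_cancel' hpe]
      exact_mod_cast hdvd1
    rcases h1 with ⟨t, ht⟩
    refine ⟨t, ?_⟩
    have hc : ((e / p : ℕ) : ℤ) ≠ 0 := by exact_mod_cast hep0
    have : m * (e / p : ℕ) = (p * t) * (e / p : ℕ) := by ring_nf; ring_nf at ht; linarith [ht]
    exact mul_right_cancel₀ hc this
  obtain ⟨m', hm'⟩ := hpm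
  -- construct y of order p outside zpowers g
  set y := x * (g ^ m')⁻¹ with hydef
  have hyp : y ^ p = 1 := by
    have hcxy : Commute x (g ^ m')⁻¹ := hcomm _ _
    have h1 : ((g ^ m')⁻¹) ^ p = (g ^ m)⁻¹ := by
      rw [← zpow_natCast ((g ^ m')⁻¹), ← zpow_neg, ← zpow_mul, ← zpow_neg]
      congr 1
      rw [hm']; ring
    rw [hydef, hcxy.mul_pow, h1, hm]
    simp
  have hy1 : y ≠ 1 := by
    intro h
    apply hxg
    have : x = g ^ m' := by
      rw [hydef] at h
      rwa [mul_inv_eq_one] at h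
    exact this ▸ zpow_mem (mem_zpowers g) m'
  have hyto : orderOf y = p := orderOf_eq_prime hyp hy1
  have hyg : y ∉ zpowers g := by
    intro h
    apply hxg
    have : x = y * g ^ m' := by rw [hydef]; group
    exact this ▸ mul_mem h (zpow_mem (mem_zpowers g) m')
  -- construct z of order p inside zpowers g
  set z := g ^ (e / p) with hzdef
  have hzo : orderOf z = p := by
    rw [hzdef, orderOf_pow, hge, Nat.gcd_eq_right (Nat.div_dvd_of_dvd hpe),
      Nat.div_div_self hpe he0]
  have hz1 : z ≠ 1 := by
    intro h; rw [h, orderOf_one] at hzo; exact hp.one_lt.ne' hzo.symm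
  have hzg : z ∈ zpowers g := by rw [hzdef]; exact pow_mem (mem_zpowers g) _
  -- construct w = y * z of order p
  set w := y * z with hwdef
  have hw1 : w ≠ 1 := by
    intro h
    apply hyg
    have : y = z⁻¹ := by rw [hwdef] at h; rwa [mul_eq_one_iff_eq_inv] at h
    exact this ▸ inv_mem hzg
  have hwp : w ^ p = 1 := by
    rw [hwdef, (hcomm y z).mul_pow, hyp, one_mul, hzdef, ← pow_mul,
      Nat.div_mul_cancel hpe]
    exact hge ▸ pow_orderOf_eq_one g
  have hwo : orderOf w = p := orderOf_eq_prime hwp hw1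
  -- the three subgroups
  set A := zpowers y with hA
  set B := zpowers z with hB
  set C := zpowers w with hC
  have hcA : Nat.card A = p := by rw [hA, Nat.card_zpowers, hyto]
  have hcB : Nat.card B = p := by rw [hB, Nat.card_zpowers, hzo]
  have hcC : Nat.card C = p := by rw [hC, Nat.card_zpowers, hwo]
  have hAg : ¬ A ≤ zpowers g := fun h => hyg (h (mem_zpowers y))
  have hCA : C ≠ A := by
    intro h
    apply hAg
    have hzA : z ∈ A := by
      have hwA : w ∈ A := h ▸ mem_zpowers w
      have : z = y⁻¹ * w := by rw [hwdef]; group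
      exact this ▸ mul_mem (inv_mem (mem_zpowers y)) hwA
    have h1 : zpowers z ≤ A := zpowers_le.mpr hzA
    have h2 : zpowers z = A := Subgroup.eq_of_le_of_card_ge h1 (by rw [hcA, ← hB, hcB])
    rw [← h2]
    exact zpowers_le.mpr hzg
  have hCB : C ≠ B := by
    intro h
    apply hyg
    have hwB : w ∈ zpowers g := (zpowers_le.mpr ((h ▸ mem_zpowers w : w ∈ B) : w ∈ B)).trans
      (zpowers_le.mpr hzg) (mem_zpowers w)
    have : y = w * z⁻¹ := by rw [hwdef]; group
    exact this ▸ mul_mem hwB (inv_mem hzg)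
  have hCAB : C ≤ A ⊔ B := by
    refine zpowers_le.mpr ?_
    rw [hwdef]
    exact mul_mem (mem_sup_left (mem_zpowers y)) (mem_sup_right (mem_zpowers z))
  have hfinal : C = ⊥ := by
    have h1 : C = C ⊓ (A ⊔ B) := (inf_of_le_left hCAB).symm
    rw [h1, hinf, aux_inf_eq_bot hp hcC hcA hCA, aux_inf_eq_bot hp hcC hcB hCB, sup_bot_eq]
  rw [hfinal, Subgroup.card_bot] at hcC
  exact hp.one_lt.ne hcC

/-- In a finite cyclic group, the subgroup of index the card divided by `d` has order `d`. -/
theorem aux_card_zp (g : G) (hg : ∀ x, x ∈ zpowers g) {d : ℕ}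
    (hd : d ∣ Nat.card G) (hd0 : d ≠ 0) :
    Nat.card (zpowers (g ^ (Nat.card G / d))) = d := by
  have hn : orderOf g = Nat.card G := orderOf_eq_card_of_forall_mem_zpowers hg
  have hn0 : Nat.card G ≠ 0 := Nat.card_pos.ne'
  rw [Nat.card_zpowers, orderOf_pow, hn, Nat.gcd_eq_right (Nat.div_dvd_of_dvd hd),
    Nat.div_div_self hd hn0]

theorem aux_zp_le_zp (g : G) {d e : ℕ} (hde : d ∣ e) (he : e ∣ Nat.card G) :
    zpowers (g ^ (Nat.card G / d)) ≤ zpowers (g ^ (Nat.card G / e)) := by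
  have hn0 : Nat.card G ≠ 0 := Nat.card_pos.ne'
  obtain ⟨c, rfl⟩ := hde
  obtain ⟨f, hf⟩ := he
  have hd0 : d ≠ 0 := by rintro rfl; rw [hf] at hn0; simp at hn0
  have hc0 : c ≠ 0 := by rintro rfl; rw [hf] at hn0; simp at hn0
  refine zpowers_le.mpr ?_
  have h1 : Nat.card G / d = c * f := by
    rw [hf, mul_assoc, Nat.mul_div_cancel_left _ (Nat.pos_of_ne_zero hd0)]
  have h2 : Nat.card G / (d * c) = f := by
    rw [hf, Nat.mul_div_cancel_left _ (Nat.pos_of_ne_zero (by positivity))]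
  rw [h1, h2, mul_comm c f, pow_mul]
  exact pow_mem (mem_zpowers _) c

/-- Every subgroup of a finite cyclic group is the standard one of its cardinality. -/
theorem aux_subgroup_eq (g : G) (hg : ∀ x, x ∈ zpowers g) (H : Subgroup G) :
    H = zpowers (g ^ (Nat.card G / Nat.card H)) := by
  have hn : orderOf g = Nat.card G := orderOf_eq_card_of_forall_mem_zpowers hg
  have hn0 : Nat.card G ≠ 0 := Nat.card_pos.ne'
  set n := Nat.card G with hndef
  set d := Nat.card H with hddef
  have hd : d ∣ n := card_subgroup_dvd_card H
  have hd0 : d ≠ 0 := Nat.card_pos.ne'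
  have hle : H ≤ zpowers (g ^ (n / d)) := by
    intro x hx
    have hxd : x ^ d = 1 := by
      have h1 : orderOf x ∣ d := by
        rw [← Subgroup.orderOf_mk x hx]; exact orderOf_dvd_natCard _
      exact orderOf_dvd_iff_pow_eq_one.mp h1
    obtain ⟨m, hm⟩ := mem_zpowers_iff.mp (hg x)
    have hmd : (n : ℤ) ∣ m * d := by
      rw [← hn]
      refine orderOf_dvd_iff_zpow_eq_one.mpr ?_
      rw [zpow_mul, hm, zpow_natCast, hxd]
    have hnd : ((n / d : ℕ) : ℤ) ∣ m := by
      have h1 : ((n / d : ℕ) : ℤ) * d ∣ m * d := by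
        rw [← Nat.cast_mul, Nat.div_mul_cancel hd]; exact hmd
      have hc : (d : ℤ) ≠ 0 := by exact_mod_cast hd0
      exact (mul_dvd_mul_iff_right hc).mp h1
    obtain ⟨t, ht⟩ := hnd
    rw [← hm, ht, zpow_mul, zpow_natCast]
    exact zpow_mem (mem_zpowers _) t
  exact Subgroup.eq_of_le_of_card_ge hle (le_of_eq (aux_card_zp g hg hd hd0))

/-- Number of prime factors is strictly monotone under proper divisibility. -/
theorem aux_omega_lt {a b : ℕ} (h : a ∣ b) (hne : a ≠ b) (hb : b ≠ 0) :
    a.primeFactorsList.length < b.primeFactorsList.length := by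
  obtain ⟨c, rfl⟩ := h
  have ha : a ≠ 0 := by rintro rfl; simp at hb
  have hc : c ≠ 0 := by rintro rfl; simp at hb
  have hc1 : c ≠ 1 := by rintro rfl; simp at hne
  have hperm := Nat.perm_primeFactorsList_mul ha hc
  rw [hperm.length_eq, List.length_append]
  have hpos : 0 < c.primeFactorsList.length := by
    obtain ⟨p, pp, pd⟩ := Nat.exists_prime_and_dvd hc1
    have : p ∈ c.primeFactorsList := (Nat.mem_primeFactorsList_iff_dvd hc pp).mpr pd
    exact List.length_pos_iff.mpr (List.ne_nil_of_mem this)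
  omega

theorem aux_omega_le {a b : ℕ} (h : a ∣ b) (hb : b ≠ 0) :
    a.primeFactorsList.length ≤ b.primeFactorsList.length := by
  rcases eq_or_ne a b with rfl | hne
  · exact le_rfl
  · exact (aux_omega_lt h hne hb).le

/-- The Krull dimension of the subgroup lattice of a finite cyclic group is the number
of prime factors (with multiplicity) of its order. -/
theorem aux_krullDim (g : G) (hg : ∀ x, x ∈ zpowers g) :
    Order.krullDim (Subgroup G) = ((Nat.card G).primeFactorsList.length : ℕ) := by
  have hn0 : Nat.card G ≠ 0 := Nat.card_pos.ne'
  set n := Nat.card G with hndef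
  have hsm : StrictMono fun H : Subgroup G => (Nat.card H).primeFactorsList.length := by
    intro A B hAB
    refine aux_omega_lt (card_dvd_of_le hAB.le) ?_ Nat.card_pos.ne'
    intro hcard
    exact hAB.ne (Subgroup.eq_of_le_of_card_ge hAB.le hcard.ge)
  apply le_antisymm
  · have hub : ∀ p : LTSeries (Subgroup G),
        p.length ≤ n.primeFactorsList.length := by
      intro p
      have h1 : (p.map _ hsm).head + (p.map _ hsm).length ≤ (p.map _ hsm).last :=
        LTSeries.head_add_length_le_nat (p.map _ hsm)
      have h2 : (p.map _ hsm).last ≤ n.primeFactorsList.length := by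
        rw [LTSeries.last_map]
        exact aux_omega_le (card_subgroup_dvd_card _) hn0
      have h3 : p.length ≤ n.primeFactorsList.length := by
        have h4 : (p.map _ hsm).length = p.length := rfl
        omega
      exact h3
    rw [Order.krullDim_eq_iSup_length]
    have hle : (⨆ p : LTSeries (Subgroup G), (p.length : ℕ∞)) ≤
        ((n.primeFactorsList.length : ℕ) : ℕ∞) :=
      iSup_le fun p => by exact_mod_cast hub p
    exact_mod_cast hle
  · set l := n.primeFactorsList with hldef
    set N := l.length with hNdef
    set dd : ℕ → ℕ := fun i => (l.take i).prod with hdd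
    have hdvd : ∀ i : ℕ, dd i ∣ n := by
      intro i
      show (l.take i).prod ∣ n
      have hln : l.prod = n := Nat.prod_primeFactorsList hn0
      rw [← hln]
      conv_rhs => rw [← List.take_append_drop i l]
      rw [List.prod_append]
      exact dvd_mul_right _ _
    have hdd0 : ∀ i, dd i ≠ 0 := fun i h0 => hn0 (by
      have := hdvd i; rw [h0] at this; exact Nat.eq_zero_of_zero_dvd this)
    have hdmono : ∀ i j : ℕ, i ≤ j → dd i ∣ dd j := by
      intro i j hij
      show (l.take i).prod ∣ (l.take j).prod
      have htt : l.take i = (l.take j).take i := by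
        rw [List.take_take, min_eq_left hij]
      rw [htt]
      conv_rhs => rw [← List.take_append_drop i (l.take j)]
      rw [List.prod_append]
      exact dvd_mul_right _ _
    have hdstrict : ∀ i : ℕ, i < N → dd i < dd (i + 1) := by
      intro i hi
      have hstep : dd (i + 1) = dd i * l.get ⟨i, hi⟩ := List.prod_take_succ l i hi
      have hprime : (l.get ⟨i, hi⟩).Prime :=
        Nat.prime_of_mem_primeFactorsList (List.get_mem l ⟨i, hi⟩)
      rw [hstep]
      exact Nat.lt_mul_iff_one_lt_right (Nat.pos_of_ne_zero (hdd0 i)) |>.mpr hprime.one_lt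
    set f : Fin (N + 1) → Subgroup G := fun i => zpowers (g ^ (n / dd i)) with hf
    have hsm : StrictMono f := by
      intro i j hij
      have hle : f i ≤ f j := aux_zp_le_zp g (hdmono i j hij.le) (hdvd j)
      have hne : f i ≠ f j := by
        intro h
        have hci : Nat.card (f i) = dd i := aux_card_zp g hg (hdvd i) (hdd0 i)
        have hcj : Nat.card (f j) = dd j := aux_card_zp g hg (hdvd j) (hdd0 j)
        have hlt : dd i < dd j := by
          calc dd i < dd (i + 1) := hdstrict i (by omega)
            _ ≤ dd j := Nat.le_of_dvd (Nat.pos_of_ne_zero (hdd0 j))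
                (hdmono (i + 1) j (by omega))
        rw [h, hcj] at hci
        omega
      exact lt_of_le_of_ne hle hne
    have := Order.LTSeries.length_le_krullDim (LTSeries.mk N f hsm)
    exact_mod_cast this

/-- The subgroups of a finite cyclic group biject with the divisors of its order. -/
noncomputable def auxEquivDivisors (g : G) (hg : ∀ x, x ∈ zpowers g) :
    Subgroup G ≃ {d : ℕ // d ∈ (Nat.card G).divisors} where
  toFun H := ⟨Nat.card H, Nat.mem_divisors.mpr ⟨card_subgroup_dvd_card H, Nat.card_pos.ne'⟩⟩
  invFun d := zpowers (g ^ (Nat.card G / d.1))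
  left_inv H := (aux_subgroup_eq g hg H).symm
  right_inv d := by
    obtain ⟨hd, hn0⟩ := Nat.mem_divisors.mp d.2
    have hd0 : d.1 ≠ 0 := by rintro h; rw [h] at hd; exact hn0 (Nat.eq_zero_of_zero_dvd hd)
    exact Subtype.ext (aux_card_zp g hg hd hd0)

theorem aux_card_subgroups (g : G) (hg : ∀ x, x ∈ zpowers g) :
    Nat.card (Subgroup G) = (Nat.card G).divisors.card := by
  rw [Nat.card_congr (auxEquivDivisors g hg)]
  exact Nat.card_eq_finsetCard _

end Aux

/-- For a finite Galois extension `k ⊂ L` of degree `n = p₁^{e₁} ⋯ p_m^{e_m}` whose lattice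
of intermediate fields is distributive, the extension is cyclic, the length of the lattice
of intermediate fields is `e₁ + ⋯ + e_m` (the number of prime factors of `n` counted with
multiplicity), and the number of intermediate fields is the number of divisors of `n`. -/
theorem galois_distrib_cyclic_length_card {k L : Type*} [Field k] [Field L]
    [Algebra k L] [FiniteDimensional k L] [IsGalois k L]
    (hdistrib : ∀ A B C : IntermediateField k L, A ⊓ (B ⊔ C) = (A ⊓ B) ⊔ (A ⊓ C)) :
    IsCyclic (L ≃ₐ[k] L) ∧
      Order.krullDim (IntermediateField k L) =
        ((Module.finrank k L).primeFactorsList.length : ℕ) ∧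
      Nat.card (IntermediateField k L) = (Module.finrank k L).divisors.card := by
  set G := L ≃ₐ[k] L with hGdef
  have e : IntermediateField k L ≃o (Subgroup G)ᵒᵈ := IsGalois.intermediateFieldEquivSubgroup
  -- the other distributive law for intermediate fields
  have hIF2 : ∀ a b c : IntermediateField k L, a ⊔ (b ⊓ c) = (a ⊔ b) ⊓ (a ⊔ c) := by
    intro a b c
    letI : DistribLattice (IntermediateField k L) :=
      DistribLattice.ofInfSupLe (fun a b c => (hdistrib a b c).le)
    exact sup_inf_left a b c
  -- transfer to subgroups
  set F : Subgroup G → IntermediateField k L := fun A => e.symm (OrderDual.toDual A) with hF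
  have hFinj : Function.Injective F := fun A B h => by
    simpa using e.symm.injective h
  have hFsup : ∀ A B : Subgroup G, F (A ⊔ B) = F A ⊓ F B := by
    intro A B
    exact e.symm.map_inf (OrderDual.toDual A) (OrderDual.toDual B)
  have hFinf : ∀ A B : Subgroup G, F (A ⊓ B) = F A ⊔ F B := by
    intro A B
    exact e.symm.map_sup (OrderDual.toDual A) (OrderDual.toDual B)
  have hsub_sup : ∀ A B C : Subgroup G, A ⊔ (B ⊓ C) = (A ⊔ B) ⊓ (A ⊔ C) := by
    intro A B C
    apply hFinj
    simp only [hFsup, hFinf]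
    exact hdistrib _ _ _
  have hsub_inf : ∀ A B C : Subgroup G, A ⊓ (B ⊔ C) = (A ⊓ B) ⊔ (A ⊓ C) := by
    intro A B C
    apply hFinj
    simp only [hFsup, hFinf]
    exact hIF2 _ _ _
  have hcomm : ∀ a b : G, Commute a b := aux_comm hsub_sup
  have hcyc : IsCyclic G := aux_cyclic hsub_inf hcomm
  obtain ⟨g, hg⟩ := hcyc.exists_generator
  have hcard_eq : Nat.card G = Module.finrank k L := by
    rw [Nat.card_eq_fintype_card]
    rw [← Nat.card_eq_fintype_card]; exact IsGalois.card_aut_eq_finrank k L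
  refine ⟨hcyc, ?_, ?_⟩
  · rw [Order.krullDim_eq_of_orderIso e, Order.krullDim_orderDual,
      aux_krullDim g hg, hcard_eq]
  · have h1 : Nat.card (IntermediateField k L) = Nat.card (Subgroup G) :=
      Nat.card_congr (e.toEquiv.trans OrderDual.ofDual)
    rw [h1, aux_card_subgroups g hg, hcard_eq]
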